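/- If the Doppler shift is modeled as an additive wavelength shift, i.e., g_add(x; δ) = e^{-(x-μ)²/(2σ²)} - e^{-(x+δ-μ)²/(2σ²)}, expanded in the Hermite-Gaussian basis ψ_n(·; μ, σ) with coefficients c_n(δ), then the standardized approximation error using only the first-degree term tends to zero: lim_{δ→0} ∫ (g_add(x;δ) - c_1(δ)ψ_1(x;μ,σ))² dx / ∫ g_add(x;δ)² dx = 0. -/

import Mathlib

open Real MeasureTheory

/-- The `n`-th physicist's Hermite polynomial, via the Rodrigues formula. -/
noncomputable def physHermite (n : ℕ) (x : ℝ) : ℝ :=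
  (-1 : ℝ) ^ n * Real.exp (x ^ 2) * iteratedDeriv n (fun t : ℝ => Real.exp (-t ^ 2)) x

/-- The generalized Hermite-Gaussian function `ψ_n(x; μ, σ)`. -/
noncomputable def hermiteGaussian (n : ℕ) (μ σ x : ℝ) : ℝ :=
  (Real.sqrt (σ * 2 ^ n * n.factorial * Real.sqrt Real.pi))⁻¹ *
    physHermite n ((x - μ) / σ) * Real.exp (-(x - μ) ^ 2 / (2 * σ ^ 2))

/-- The difference between a Gaussian and an additively shifted version of it. -/
noncomputable def addDiff (μ σ δ x : ℝ) : ℝ :=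
  Real.exp (-(x - μ) ^ 2 / (2 * σ ^ 2)) - Real.exp (-(x + δ - μ) ^ 2 / (2 * σ ^ 2))

/-- The Hermite-Gaussian expansion coefficients of the additive-shift difference. -/
noncomputable def addCoeff (n : ℕ) (μ σ δ : ℝ) : ℝ :=
  ∫ x : ℝ, hermiteGaussian n μ σ x * addDiff μ σ δ x

/- ## Auxiliary results -/

open Filter

lemma physHermite_one (x : ℝ) : physHermite 1 x = 2 * x := by
  have h : HasDerivAt (fun t : ℝ => Real.exp (-t ^ 2)) (Real.exp (-x ^ 2) * (-(2 * x))) x := by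
    have := ((hasDerivAt_pow 2 x).neg).exp
    simpa using this
  unfold physHermite
  rw [iteratedDeriv_one, h.deriv]
  calc (-1 : ℝ) ^ 1 * Real.exp (x ^ 2) * (Real.exp (-x ^ 2) * (-(2 * x)))
      = (Real.exp (x ^ 2) * Real.exp (-x ^ 2)) * (2 * x) := by ring
    _ = 2 * x := by rw [← Real.exp_add]; simp

lemma integrable_gauss' {b : ℝ} (hb : 0 < b) :
    Integrable fun x : ℝ => Real.exp (-(b * x ^ 2)) := by
  simpa only [neg_mul] using integrable_exp_neg_mul_sq hb

lemma integral_gauss' {b : ℝ} (hb : 0 < b) :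
    ∫ x : ℝ, Real.exp (-(b * x ^ 2)) = Real.sqrt (π / b) := by
  simpa only [neg_mul] using integral_gaussian b

lemma integrable_x_gauss {b : ℝ} (hb : 0 < b) :
    Integrable fun x : ℝ => x * Real.exp (-(b * x ^ 2)) := by
  simpa only [neg_mul] using integrable_mul_exp_neg_mul_sq hb

lemma integral_x_gauss {b : ℝ} (hb : 0 < b) :
    ∫ x : ℝ, x * Real.exp (-(b * x ^ 2)) = 0 := by
  have h : ∫ x : ℝ, -(x * Real.exp (-(b * x ^ 2))) = ∫ x : ℝ, x * Real.exp (-(b * x ^ 2)) := by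
    rw [← integral_neg_eq_self (fun x : ℝ => x * Real.exp (-(b * x ^ 2))) volume]
    congr 1; funext x; simp only [neg_sq]; ring
  rw [integral_neg] at h
  linarith

lemma integrable_sq_gauss {b : ℝ} (hb : 0 < b) :
    Integrable fun x : ℝ => x ^ 2 * Real.exp (-(b * x ^ 2)) := by
  have hb2 : (0 : ℝ) < b / 2 := by positivity
  refine Integrable.mono' ((integrable_gauss' hb2).const_mul (2 / b))
    ((continuous_pow 2 |>.mul (Real.continuous_exp.comp (by continuity))).aestronglyMeasurable) ?_
  filter_upwards with x
  have hE : (0 : ℝ) < Real.exp (-(b / 2 * x ^ 2)) := Real.exp_pos _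
  have hPE : Real.exp (b / 2 * x ^ 2) * Real.exp (-(b / 2 * x ^ 2)) = 1 := by
    rw [← Real.exp_add]; simp
  have h1 : b / 2 * x ^ 2 + 1 ≤ Real.exp (b / 2 * x ^ 2) := Real.add_one_le_exp _
  have h2 := mul_le_mul_of_nonneg_right h1 hE.le
  rw [add_mul, hPE, one_mul] at h2
  have hsplit : Real.exp (-(b * x ^ 2)) =
      Real.exp (-(b / 2 * x ^ 2)) * Real.exp (-(b / 2 * x ^ 2)) := by
    rw [← Real.exp_add]; congr 1; ring
  have hnorm : ‖x ^ 2 * Real.exp (-(b * x ^ 2))‖ = x ^ 2 * Real.exp (-(b * x ^ 2)) := by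
    rw [Real.norm_eq_abs, abs_of_nonneg (by positivity)]
  rw [hnorm, hsplit]
  have h3 : b / 2 * x ^ 2 * Real.exp (-(b / 2 * x ^ 2)) ≤ 1 := by linarith
  calc x ^ 2 * (Real.exp (-(b / 2 * x ^ 2)) * Real.exp (-(b / 2 * x ^ 2)))
      = (b / 2 * x ^ 2 * Real.exp (-(b / 2 * x ^ 2)) * Real.exp (-(b / 2 * x ^ 2))) * (2 / b) := by
        field_simp
    _ ≤ (1 * Real.exp (-(b / 2 * x ^ 2))) * (2 / b) := by
        apply mul_le_mul_of_nonneg_right _ (by positivity)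
        exact mul_le_mul_of_nonneg_right h3 hE.le
    _ = 2 / b * Real.exp (-(b / 2 * x ^ 2)) := by ring

lemma integral_sq_gauss {b : ℝ} (hb : 0 < b) :
    ∫ x : ℝ, x ^ 2 * Real.exp (-(b * x ^ 2)) = Real.sqrt (π / b) / (2 * b) := by
  set F : ℝ → ℝ := fun x => x * Real.exp (-(b * x ^ 2)) with hF_def
  have hF : ∀ x : ℝ, HasDerivAt F
      (Real.exp (-(b * x ^ 2)) - 2 * b * (x ^ 2 * Real.exp (-(b * x ^ 2)))) x := by
    intro x
    have hexp : HasDerivAt (fun x : ℝ => Real.exp (-(b * x ^ 2)))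
        (Real.exp (-(b * x ^ 2)) * -(b * (2 * x))) x := by
      have := (((hasDerivAt_pow 2 x).const_mul b).neg).exp
      simpa using this
    have : HasDerivAt (fun y : ℝ => y * Real.exp (-(b * y ^ 2)))
        (1 * Real.exp (-(b * x ^ 2)) + x * (Real.exp (-(b * x ^ 2)) * -(b * (2 * x)))) x :=
      (hasDerivAt_id x).mul hexp
    convert this using 1
    ring
  have hcontF : Continuous F := by
    apply continuous_id.mul
    exact Real.continuous_exp.comp (by continuity)
  have htop : Tendsto F atTop (nhds 0) := by
    have hlo := (rpow_mul_exp_neg_mul_sq_isLittleO_exp_neg hb 1).isBigO.trans_tendsto ?_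
    · refine hlo.congr fun x => ?_
      rw [Real.rpow_one, neg_mul]
    · have : Tendsto (fun x : ℝ => -(1 / 2 : ℝ) * x) atTop atBot :=
        Tendsto.const_mul_atTop_of_neg (by norm_num) tendsto_id
      exact Real.tendsto_exp_atBot.comp this
  have hbot : Tendsto F atBot (nhds 0) := by
    have h1 : Tendsto (fun x : ℝ => -(F (-x))) atBot (nhds (-0)) :=
      (htop.comp tendsto_neg_atBot_atTop).neg
    rw [neg_zero] at h1
    refine h1.congr fun x => ?_
    simp only [hF_def, neg_sq]
    ring
  have hint : Integrable fun x : ℝ =>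
      Real.exp (-(b * x ^ 2)) - 2 * b * (x ^ 2 * Real.exp (-(b * x ^ 2))) :=
    (integrable_gauss' hb).sub ((integrable_sq_gauss hb).const_mul (2 * b))
  have h1 : ∫ x in Set.Ioi (0 : ℝ),
      (Real.exp (-(b * x ^ 2)) - 2 * b * (x ^ 2 * Real.exp (-(b * x ^ 2)))) = 0 - F 0 :=
    integral_Ioi_of_hasDerivAt_of_tendsto (hcontF.continuousWithinAt)
      (fun x _ => hF x) hint.integrableOn htop
  have h2 : ∫ x in Set.Iic (0 : ℝ),
      (Real.exp (-(b * x ^ 2)) - 2 * b * (x ^ 2 * Real.exp (-(b * x ^ 2)))) = F 0 - 0 :=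
    integral_Iic_of_hasDerivAt_of_tendsto (hcontF.continuousWithinAt)
      (fun x _ => hF x) hint.integrableOn hbot
  have h3 : ∫ x : ℝ,
      (Real.exp (-(b * x ^ 2)) - 2 * b * (x ^ 2 * Real.exp (-(b * x ^ 2)))) = 0 := by
    rw [← intervalIntegral.integral_Iic_add_Ioi hint.integrableOn hint.integrableOn, h1, h2]
    ring
  rw [integral_sub (integrable_gauss' hb) ((integrable_sq_gauss hb).const_mul (2 * b)),
    integral_const_mul, integral_gauss' hb] at h3
  have hb' : (2 : ℝ) * b ≠ 0 := by positivity
  field_simp at h3 ⊢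
  linarith

/-- Polynomial (degree ≤ 2) times a shifted Gaussian. -/
noncomputable def pg (b A B C c x : ℝ) : ℝ :=
  (A + B * x + C * x ^ 2) * Real.exp (-(b * (x + c) ^ 2))

lemma integrable_pg {b : ℝ} (hb : 0 < b) (A B C c : ℝ) :
    Integrable fun x : ℝ => pg b A B C c x := by
  have h0 : Integrable fun y : ℝ =>
      (A - B * c + C * c ^ 2) * Real.exp (-(b * y ^ 2)) := (integrable_gauss' hb).const_mul _
  have h1 : Integrable fun y : ℝ =>
      (B - 2 * C * c) * (y * Real.exp (-(b * y ^ 2))) := (integrable_x_gauss hb).const_mul _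
  have h2 : Integrable fun y : ℝ =>
      C * (y ^ 2 * Real.exp (-(b * y ^ 2))) := (integrable_sq_gauss hb).const_mul _
  have h012 : Integrable fun y : ℝ => (A - B * c + C * c ^ 2) * Real.exp (-(b * y ^ 2))
      + ((B - 2 * C * c) * (y * Real.exp (-(b * y ^ 2)))
        + C * (y ^ 2 * Real.exp (-(b * y ^ 2)))) := h0.add (h1.add h2)
  have := h012.comp_add_right c
  refine this.congr (Filter.Eventually.of_forall fun x => ?_)
  simp only [pg]
  ring

lemma integral_pg {b : ℝ} (hb : 0 < b) (A B C c : ℝ) :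
    ∫ x : ℝ, pg b A B C c x
      = (A - B * c + C * (c ^ 2 + 1 / (2 * b))) * Real.sqrt (π / b) := by
  have h0 : Integrable fun y : ℝ =>
      (A - B * c + C * c ^ 2) * Real.exp (-(b * y ^ 2)) := (integrable_gauss' hb).const_mul _
  have h1 : Integrable fun y : ℝ =>
      (B - 2 * C * c) * (y * Real.exp (-(b * y ^ 2))) := (integrable_x_gauss hb).const_mul _
  have h2 : Integrable fun y : ℝ =>
      C * (y ^ 2 * Real.exp (-(b * y ^ 2))) := (integrable_sq_gauss hb).const_mul _
  have hfun : (fun x : ℝ => pg b A B C c x) = fun x : ℝ =>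
      (fun y : ℝ => (A - B * c + C * c ^ 2) * Real.exp (-(b * y ^ 2))
        + ((B - 2 * C * c) * (y * Real.exp (-(b * y ^ 2)))
          + C * (y ^ 2 * Real.exp (-(b * y ^ 2))))) (x + c) := by
    funext x
    simp only [pg]
    ring
  have shift : ∫ x : ℝ, pg b A B C c x
      = ∫ y : ℝ, ((A - B * c + C * c ^ 2) * Real.exp (-(b * y ^ 2))
        + ((B - 2 * C * c) * (y * Real.exp (-(b * y ^ 2)))
          + C * (y ^ 2 * Real.exp (-(b * y ^ 2))))) := by
    rw [hfun]
    exact integral_add_right_eq_self (fun y : ℝ => (A - B * c + C * c ^ 2) * Real.exp (-(b * y ^ 2))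
      + ((B - 2 * C * c) * (y * Real.exp (-(b * y ^ 2)))
        + C * (y ^ 2 * Real.exp (-(b * y ^ 2))))) c
  have h12 : Integrable fun y : ℝ => (B - 2 * C * c) * (y * Real.exp (-(b * y ^ 2)))
      + C * (y ^ 2 * Real.exp (-(b * y ^ 2))) := h1.add h2
  rw [shift, integral_add h0 h12, integral_add h1 h2,
    integral_const_mul, integral_const_mul, integral_const_mul,
    integral_gauss' hb, integral_x_gauss hb, integral_sq_gauss hb]
  ring

section main
variable (μ σ δ : ℝ)

lemma den_fun (hσ : 0 < σ) :
    (fun x : ℝ => (addDiff μ σ δ x) ^ 2) = fun x : ℝ =>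
      pg (σ ^ 2)⁻¹ 1 0 0 (-μ) x
        - pg (σ ^ 2)⁻¹ (2 * Real.exp (-(δ ^ 2 / (4 * σ ^ 2)))) 0 0 (δ / 2 - μ) x
        + pg (σ ^ 2)⁻¹ 1 0 0 (δ - μ) x := by
  have hσ0 : σ ≠ 0 := ne_of_gt hσ
  funext x
  have h1 : Real.exp (-(x - μ) ^ 2 / (2 * σ ^ 2)) * Real.exp (-(x - μ) ^ 2 / (2 * σ ^ 2))
      = Real.exp (-((σ ^ 2)⁻¹ * (x + -μ) ^ 2)) := by
    rw [← Real.exp_add]; congr 1; field_simp; ring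
  have h2 : Real.exp (-(x - μ) ^ 2 / (2 * σ ^ 2)) * Real.exp (-(x + δ - μ) ^ 2 / (2 * σ ^ 2))
      = Real.exp (-(δ ^ 2 / (4 * σ ^ 2))) * Real.exp (-((σ ^ 2)⁻¹ * (x + (δ / 2 - μ)) ^ 2)) := by
    rw [← Real.exp_add, ← Real.exp_add]; congr 1; field_simp; ring
  have h3 : Real.exp (-(x + δ - μ) ^ 2 / (2 * σ ^ 2)) * Real.exp (-(x + δ - μ) ^ 2 / (2 * σ ^ 2))
      = Real.exp (-((σ ^ 2)⁻¹ * (x + (δ - μ)) ^ 2)) := by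
    rw [← Real.exp_add]; congr 1; field_simp; ring
  simp only [addDiff, pg]
  calc (Real.exp (-(x - μ) ^ 2 / (2 * σ ^ 2)) - Real.exp (-(x + δ - μ) ^ 2 / (2 * σ ^ 2))) ^ 2
      = Real.exp (-(x - μ) ^ 2 / (2 * σ ^ 2)) * Real.exp (-(x - μ) ^ 2 / (2 * σ ^ 2))
        - 2 * (Real.exp (-(x - μ) ^ 2 / (2 * σ ^ 2)) * Real.exp (-(x + δ - μ) ^ 2 / (2 * σ ^ 2)))
        + Real.exp (-(x + δ - μ) ^ 2 / (2 * σ ^ 2)) * Real.exp (-(x + δ - μ) ^ 2 / (2 * σ ^ 2)) := by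
        ring
    _ = _ := by rw [h1, h2, h3]; ring

lemma sqrt_pi_div (hσ : 0 < σ) : Real.sqrt (π / (σ ^ 2)⁻¹) = σ * Real.sqrt π := by
  have h : π / (σ ^ 2)⁻¹ = σ ^ 2 * π := by rw [div_eq_mul_inv, inv_inv, mul_comm]
  rw [h, Real.sqrt_mul (sq_nonneg σ), Real.sqrt_sq hσ.le]

lemma den_eq (hσ : 0 < σ) :
    ∫ x : ℝ, (addDiff μ σ δ x) ^ 2
      = 2 * σ * Real.sqrt π * (1 - Real.exp (-(δ ^ 2 / (4 * σ ^ 2)))) := by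
  have hb : (0 : ℝ) < (σ ^ 2)⁻¹ := by positivity
  have hsub : Integrable fun x : ℝ => pg (σ ^ 2)⁻¹ 1 0 0 (-μ) x
      - pg (σ ^ 2)⁻¹ (2 * Real.exp (-(δ ^ 2 / (4 * σ ^ 2)))) 0 0 (δ / 2 - μ) x :=
    (integrable_pg hb _ _ _ _).sub (integrable_pg hb _ _ _ _)
  rw [den_fun μ σ δ hσ,
    integral_add hsub (integrable_pg hb _ _ _ _),
    integral_sub (integrable_pg hb _ _ _ _) (integrable_pg hb _ _ _ _),
    integral_pg hb, integral_pg hb, integral_pg hb, sqrt_pi_div σ hσ]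
  ring

lemma psi_one (hσ : 0 < σ) : ∀ x : ℝ, hermiteGaussian 1 μ σ x
    = (Real.sqrt (σ * 2 * Real.sqrt π))⁻¹ * (2 * ((x - μ) / σ))
      * Real.exp (-(x - μ) ^ 2 / (2 * σ ^ 2)) := by
  intro x
  unfold hermiteGaussian
  rw [physHermite_one]
  norm_num

lemma cross_fun (hσ : 0 < σ) :
    (fun x : ℝ => hermiteGaussian 1 μ σ x * addDiff μ σ δ x) = fun x : ℝ =>
      pg (σ ^ 2)⁻¹ (-μ * (2 * (Real.sqrt (σ * 2 * Real.sqrt π))⁻¹ / σ))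
        (2 * (Real.sqrt (σ * 2 * Real.sqrt π))⁻¹ / σ) 0 (-μ) x
      - pg (σ ^ 2)⁻¹
        (-μ * (2 * (Real.sqrt (σ * 2 * Real.sqrt π))⁻¹ / σ * Real.exp (-(δ ^ 2 / (4 * σ ^ 2)))))
        (2 * (Real.sqrt (σ * 2 * Real.sqrt π))⁻¹ / σ * Real.exp (-(δ ^ 2 / (4 * σ ^ 2)))) 0
        (δ / 2 - μ) x := by
  have hσ0 : σ ≠ 0 := ne_of_gt hσ
  funext x
  have h1 : Real.exp (-(x - μ) ^ 2 / (2 * σ ^ 2)) * Real.exp (-(x - μ) ^ 2 / (2 * σ ^ 2))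
      = Real.exp (-((σ ^ 2)⁻¹ * (x + -μ) ^ 2)) := by
    rw [← Real.exp_add]; congr 1; field_simp; ring
  have h2 : Real.exp (-(x - μ) ^ 2 / (2 * σ ^ 2)) * Real.exp (-(x + δ - μ) ^ 2 / (2 * σ ^ 2))
      = Real.exp (-(δ ^ 2 / (4 * σ ^ 2))) * Real.exp (-((σ ^ 2)⁻¹ * (x + (δ / 2 - μ)) ^ 2)) := by
    rw [← Real.exp_add, ← Real.exp_add]; congr 1; field_simp; ring
  rw [psi_one μ σ hσ x]
  simp only [addDiff, pg]
  set N := (Real.sqrt (σ * 2 * Real.sqrt π))⁻¹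
  calc N * (2 * ((x - μ) / σ)) * Real.exp (-(x - μ) ^ 2 / (2 * σ ^ 2))
        * (Real.exp (-(x - μ) ^ 2 / (2 * σ ^ 2)) - Real.exp (-(x + δ - μ) ^ 2 / (2 * σ ^ 2)))
      = (2 * N / σ) * (x - μ)
          * (Real.exp (-(x - μ) ^ 2 / (2 * σ ^ 2)) * Real.exp (-(x - μ) ^ 2 / (2 * σ ^ 2)))
        - (2 * N / σ) * (x - μ)
          * (Real.exp (-(x - μ) ^ 2 / (2 * σ ^ 2)) * Real.exp (-(x + δ - μ) ^ 2 / (2 * σ ^ 2))) := by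
        field_simp
    _ = _ := by rw [h1, h2]; ring

lemma coeff_eq (hσ : 0 < σ) :
    addCoeff 1 μ σ δ = (Real.sqrt (σ * 2 * Real.sqrt π))⁻¹ * δ * Real.sqrt π
      * Real.exp (-(δ ^ 2 / (4 * σ ^ 2))) := by
  have hσ0 : σ ≠ 0 := ne_of_gt hσ
  have hb : (0 : ℝ) < (σ ^ 2)⁻¹ := by positivity
  unfold addCoeff
  rw [cross_fun μ σ δ hσ, integral_sub (integrable_pg hb _ _ _ _) (integrable_pg hb _ _ _ _),
    integral_pg hb, integral_pg hb, sqrt_pi_div σ hσ]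
  field_simp
  ring

lemma norm_fun (hσ : 0 < σ) :
    (fun x : ℝ => (hermiteGaussian 1 μ σ x) ^ 2) = fun x : ℝ =>
      pg (σ ^ 2)⁻¹ (4 * ((Real.sqrt (σ * 2 * Real.sqrt π))⁻¹) ^ 2 / σ ^ 2 * μ ^ 2)
        (-(2 * (4 * ((Real.sqrt (σ * 2 * Real.sqrt π))⁻¹) ^ 2 / σ ^ 2) * μ))
        (4 * ((Real.sqrt (σ * 2 * Real.sqrt π))⁻¹) ^ 2 / σ ^ 2) (-μ) x := by
  have hσ0 : σ ≠ 0 := ne_of_gt hσ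
  funext x
  have h1 : Real.exp (-(x - μ) ^ 2 / (2 * σ ^ 2)) * Real.exp (-(x - μ) ^ 2 / (2 * σ ^ 2))
      = Real.exp (-((σ ^ 2)⁻¹ * (x + -μ) ^ 2)) := by
    rw [← Real.exp_add]; congr 1; field_simp; ring
  rw [psi_one μ σ hσ x]
  simp only [pg]
  set N := (Real.sqrt (σ * 2 * Real.sqrt π))⁻¹
  calc (N * (2 * ((x - μ) / σ)) * Real.exp (-(x - μ) ^ 2 / (2 * σ ^ 2))) ^ 2
      = (4 * N ^ 2 / σ ^ 2) * (x - μ) ^ 2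
          * (Real.exp (-(x - μ) ^ 2 / (2 * σ ^ 2)) * Real.exp (-(x - μ) ^ 2 / (2 * σ ^ 2))) := by
        field_simp
        ring
    _ = _ := by rw [h1]; ring

lemma norm_eq (hσ : 0 < σ) :
    ∫ x : ℝ, (hermiteGaussian 1 μ σ x) ^ 2 = 1 := by
  have hσ0 : σ ≠ 0 := ne_of_gt hσ
  have hb : (0 : ℝ) < (σ ^ 2)⁻¹ := by positivity
  have hπ : (0 : ℝ) < Real.sqrt π := Real.sqrt_pos.mpr pi_pos
  have hN : ((Real.sqrt (σ * 2 * Real.sqrt π))⁻¹) ^ 2 = (σ * 2 * Real.sqrt π)⁻¹ := by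
    rw [inv_pow, Real.sq_sqrt (by positivity)]
  rw [norm_fun μ σ hσ, integral_pg hb, sqrt_pi_div σ hσ, hN]
  have h2b : 1 / (2 * (σ ^ 2)⁻¹) = σ ^ 2 / 2 := by field_simp
  rw [h2b]
  field_simp
  ring

lemma num_eq (hσ : 0 < σ) :
    ∫ x : ℝ, (addDiff μ σ δ x - addCoeff 1 μ σ δ * hermiteGaussian 1 μ σ x) ^ 2
      = (∫ x : ℝ, (addDiff μ σ δ x) ^ 2) - (addCoeff 1 μ σ δ) ^ 2 := by
  have hb : (0 : ℝ) < (σ ^ 2)⁻¹ := by positivity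
  set c := addCoeff 1 μ σ δ with hc
  have hint_den : Integrable fun x : ℝ => (addDiff μ σ δ x) ^ 2 := by
    rw [den_fun μ σ δ hσ]
    exact ((integrable_pg hb _ _ _ _).sub (integrable_pg hb _ _ _ _)).add (integrable_pg hb _ _ _ _)
  have hint_cross : Integrable fun x : ℝ => hermiteGaussian 1 μ σ x * addDiff μ σ δ x := by
    rw [cross_fun μ σ δ hσ]
    exact (integrable_pg hb _ _ _ _).sub (integrable_pg hb _ _ _ _)
  have hint_norm : Integrable fun x : ℝ => (hermiteGaussian 1 μ σ x) ^ 2 := by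
    rw [norm_fun μ σ hσ]
    exact integrable_pg hb _ _ _ _
  have hfun : (fun x : ℝ => (addDiff μ σ δ x - c * hermiteGaussian 1 μ σ x) ^ 2)
      = fun x : ℝ => ((addDiff μ σ δ x) ^ 2
          - (2 * c) * (hermiteGaussian 1 μ σ x * addDiff μ σ δ x))
        + c ^ 2 * (hermiteGaussian 1 μ σ x) ^ 2 := by
    funext x; ring
  have hcm : Integrable fun x : ℝ =>
      (2 * c) * (hermiteGaussian 1 μ σ x * addDiff μ σ δ x) := hint_cross.const_mul _
  have hcm2 : Integrable fun x : ℝ =>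
      c ^ 2 * (hermiteGaussian 1 μ σ x) ^ 2 := hint_norm.const_mul _
  have hsub : Integrable fun x : ℝ => (addDiff μ σ δ x) ^ 2
      - (2 * c) * (hermiteGaussian 1 μ σ x * addDiff μ σ δ x) := hint_den.sub hcm
  rw [hfun, integral_add hsub hcm2,
    integral_sub hint_den hcm, integral_const_mul, integral_const_mul,
    norm_eq μ σ hσ]
  have : ∫ x : ℝ, hermiteGaussian 1 μ σ x * addDiff μ σ δ x = c := rfl
  rw [this]
  ring

end main

open Filter in
theorem standardized_approx_error_additive_limit (μ σ : ℝ) (hσ : 0 < σ) :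
    Tendsto
      (fun δ : ℝ =>
        (∫ x : ℝ, (addDiff μ σ δ x - addCoeff 1 μ σ δ * hermiteGaussian 1 μ σ x) ^ 2) /
          (∫ x : ℝ, (addDiff μ σ δ x) ^ 2))
      (nhdsWithin 0 {(0 : ℝ)}ᶜ) (nhds 0) := by
  have hσ0 : σ ≠ 0 := ne_of_gt hσ
  have hπ : (0 : ℝ) < Real.sqrt π := Real.sqrt_pos.mpr pi_pos
  -- the limit of `(1 - exp (-u)) / u` as `u → 0`
  have hslope : Tendsto (fun u : ℝ => (1 - Real.exp (-u)) / u)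
      (nhdsWithin 0 {(0 : ℝ)}ᶜ) (nhds 1) := by
    have hg : HasDerivAt (fun u : ℝ => 1 - Real.exp (-u)) 1 0 := by
      have h := ((Real.hasDerivAt_exp (-0 : ℝ)).comp 0 (hasDerivAt_neg 0)).const_sub 1
      simpa [Function.comp] using h
    have h := hasDerivAt_iff_tendsto_slope.mp hg
    refine h.congr fun u => ?_
    simp [slope_def_field]
  have hφ : Tendsto (fun u : ℝ => u * Real.exp (-(2 * u)) / (1 - Real.exp (-u)))
      (nhdsWithin 0 (Set.Ioi 0)) (nhds 1) := by
    have hmono : nhdsWithin (0 : ℝ) (Set.Ioi 0) ≤ nhdsWithin 0 {(0 : ℝ)}ᶜ :=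
      nhdsWithin_mono 0 fun x hx => ne_of_gt hx
    have h1 : Tendsto (fun u : ℝ => u / (1 - Real.exp (-u)))
        (nhdsWithin 0 (Set.Ioi 0)) (nhds 1) := by
      have h := ((hslope.mono_left hmono).inv₀ one_ne_zero)
      have he : ∀ u : ℝ, ((1 - Real.exp (-u)) / u)⁻¹ = u / (1 - Real.exp (-u)) :=
        fun u => inv_div _ _
      simpa [he] using h
    have h2 : Tendsto (fun u : ℝ => Real.exp (-(2 * u)))
        (nhdsWithin 0 (Set.Ioi 0)) (nhds 1) := by
      have hcont : Continuous fun u : ℝ => Real.exp (-(2 * u)) := by continuity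
      have h2' : Tendsto (fun u : ℝ => Real.exp (-(2 * u)))
          (nhdsWithin 0 (Set.Ioi 0)) (nhds (Real.exp (-(2 * 0)))) :=
        (hcont.tendsto 0).mono_left nhdsWithin_le_nhds
      simpa using h2'
    have := h2.mul h1
    rw [one_mul] at this
    refine this.congr fun u => ?_
    ring
  have hu : Tendsto (fun δ : ℝ => δ ^ 2 / (4 * σ ^ 2))
      (nhdsWithin 0 {(0 : ℝ)}ᶜ) (nhdsWithin 0 (Set.Ioi 0)) := by
    refine tendsto_nhdsWithin_of_tendsto_nhds_of_eventually_within _ ?_ ?_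
    · have hcont : Continuous fun δ : ℝ => δ ^ 2 / (4 * σ ^ 2) := by continuity
      have h0' : Tendsto (fun δ : ℝ => δ ^ 2 / (4 * σ ^ 2))
          (nhdsWithin (0 : ℝ) {(0 : ℝ)}ᶜ) (nhds ((0 : ℝ) ^ 2 / (4 * σ ^ 2))) :=
        (hcont.tendsto 0).mono_left nhdsWithin_le_nhds
      simpa using h0'
    · filter_upwards [self_mem_nhdsWithin] with δ hδ
      have hδ0 : δ ≠ 0 := hδ
      have hδ2 : (0 : ℝ) < δ ^ 2 := lt_of_le_of_ne (sq_nonneg δ) (Ne.symm (pow_ne_zero 2 hδ0))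
      exact div_pos hδ2 (by positivity)
  have hcomp := hφ.comp hu
  have hmain := hcomp.const_sub 1
  rw [sub_self] at hmain
  refine Tendsto.congr' ?_ hmain
  filter_upwards [self_mem_nhdsWithin] with δ hδ
  have hδ0 : δ ≠ 0 := hδ
  have hδ2 : (0 : ℝ) < δ ^ 2 := lt_of_le_of_ne (sq_nonneg δ) (Ne.symm (pow_ne_zero 2 hδ0))
  simp only [Function.comp_apply]
  rw [num_eq μ σ δ hσ, den_eq μ σ δ hσ, coeff_eq μ σ δ hσ]
  have hE2 : Real.exp (-(2 * (δ ^ 2 / (4 * σ ^ 2))))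
      = (Real.exp (-(δ ^ 2 / (4 * σ ^ 2)))) ^ 2 := by
    conv_rhs => rw [pow_two]
    rw [← Real.exp_add]
    congr 1
    ring
  have hc2 : ((Real.sqrt (σ * 2 * Real.sqrt π))⁻¹ * δ * Real.sqrt π
        * Real.exp (-(δ ^ 2 / (4 * σ ^ 2)))) ^ 2
      = δ ^ 2 * Real.sqrt π * (Real.exp (-(δ ^ 2 / (4 * σ ^ 2)))) ^ 2 / (2 * σ) := by
    rw [mul_pow, mul_pow, mul_pow, inv_pow,
      Real.sq_sqrt (by positivity : (0:ℝ) ≤ σ * 2 * Real.sqrt π)]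
    rw [Real.sq_sqrt Real.pi_pos.le]
    have hpp : Real.sqrt π * Real.sqrt π = π := Real.mul_self_sqrt Real.pi_pos.le
    field_simp
    linear_combination (-1 : ℝ) * hpp
  rw [hE2, hc2]
  set E := Real.exp (-(δ ^ 2 / (4 * σ ^ 2))) with hE_def
  have hE1 : E < 1 := by
    rw [hE_def]
    apply Real.exp_lt_one_iff.mpr
    have : (0 : ℝ) < δ ^ 2 / (4 * σ ^ 2) := div_pos hδ2 (by positivity)
    linarith
  have hEpos : (0 : ℝ) < E := Real.exp_pos _
  have h1E' : (0 : ℝ) < 1 - E := by linarith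
  have hD : (0 : ℝ) < 2 * σ * Real.sqrt π * (1 - E) := by positivity
  have h1E : (1 : ℝ) - E ≠ 0 := ne_of_gt h1E'
  rw [eq_div_iff (ne_of_gt hD)]
  field_simp
  ring
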